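/- Let R1, R2 > 0 and let x1, x2 be points of the Euclidean plane ℝ² with r = ‖x1 − x2‖ satisfying |R1 − R2| ≤ r and r ≤ R1 + R2 and r > 0. Then the area of the intersection b(x1,R1) ∩ b(x2,R2) equals R1²·arccos((r² + R1² − R2²)/(2 r R1)) + R2²·arccos((r² + R2² − R1²)/(2 r R2)) − t/2, where t = √((R1+R2+r)(R1+R2−r)(R1−R2+r)(−R1+R2+r)). -/

import Mathlib

open MeasureTheory Real
open Set

private lemma hasDerivAt_F {R x : ℝ} (hR : 0 < R) (hx1 : -R < x) (hx2 : x < R) :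
    HasDerivAt (fun y : ℝ => R ^ 2 * Real.arcsin (y / R) + y * Real.sqrt (R ^ 2 - y ^ 2))
      (2 * Real.sqrt (R ^ 2 - x ^ 2)) x := by
  have hpos : 0 < R ^ 2 - x ^ 2 := by nlinarith
  have hs : 0 < Real.sqrt (R ^ 2 - x ^ 2) := Real.sqrt_pos.2 hpos
  have hss : Real.sqrt (R ^ 2 - x ^ 2) ^ 2 = R ^ 2 - x ^ 2 := Real.sq_sqrt hpos.le
  have h1' : x / R ≠ -1 := by
    intro h
    rw [div_eq_iff hR.ne'] at h
    nlinarith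
  have h2' : x / R ≠ 1 := by
    intro h
    rw [div_eq_iff hR.ne'] at h
    nlinarith
  have harc : HasDerivAt (fun y : ℝ => Real.arcsin (y / R))
      (1 / Real.sqrt (1 - (x / R) ^ 2) * (1 / R)) x := by
    have hdiv : HasDerivAt (fun y : ℝ => y / R) (1 / R) x := (hasDerivAt_id x).div_const R
    exact (Real.hasDerivAt_arcsin h1' h2').comp x hdiv
  have hin : HasDerivAt (fun y : ℝ => R ^ 2 - y ^ 2) (-(2 * x)) x := by
    simpa using ((hasDerivAt_pow 2 x).const_sub (R ^ 2))
  have hsq : HasDerivAt (fun y : ℝ => Real.sqrt (R ^ 2 - y ^ 2))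
      (-(2 * x) / (2 * Real.sqrt (R ^ 2 - x ^ 2))) x := hin.sqrt hpos.ne'
  have hmul : HasDerivAt (fun y : ℝ => y * Real.sqrt (R ^ 2 - y ^ 2))
      (1 * Real.sqrt (R ^ 2 - x ^ 2) + x * (-(2 * x) / (2 * Real.sqrt (R ^ 2 - x ^ 2)))) x :=
    (hasDerivAt_id x).mul hsq
  have htot : HasDerivAt (fun y : ℝ => R ^ 2 * Real.arcsin (y / R) + y * Real.sqrt (R ^ 2 - y ^ 2)) _ x :=
    ((harc.const_mul (R ^ 2)).add hmul)
  convert htot using 1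
  have hsq1 : Real.sqrt (1 - (x / R) ^ 2) = Real.sqrt (R ^ 2 - x ^ 2) / R := by
    rw [show (1 : ℝ) - (x / R) ^ 2 = (R ^ 2 - x ^ 2) / R ^ 2 by field_simp,
      Real.sqrt_div hpos.le, Real.sqrt_sq hR.le]
  rw [hsq1]
  field_simp
  linear_combination hss

private lemma integral_two_sqrt {R a : ℝ} (hR : 0 < R) (ha : -R ≤ a) (ha' : a ≤ R) :
    ∫ x in a..R, 2 * Real.sqrt (R ^ 2 - x ^ 2)
      = R ^ 2 * Real.arccos (a / R) - a * Real.sqrt (R ^ 2 - a ^ 2) := by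
  have hcont : ContinuousOn
      (fun y : ℝ => R ^ 2 * Real.arcsin (y / R) + y * Real.sqrt (R ^ 2 - y ^ 2)) (Icc a R) := by
    apply Continuous.continuousOn
    continuity
  have hderiv : ∀ x ∈ Ioo a R,
      HasDerivAt (fun y : ℝ => R ^ 2 * Real.arcsin (y / R) + y * Real.sqrt (R ^ 2 - y ^ 2))
        (2 * Real.sqrt (R ^ 2 - x ^ 2)) x := fun x hx =>
    hasDerivAt_F hR (lt_of_le_of_lt ha hx.1) hx.2
  have hint : IntervalIntegrable (fun x : ℝ => 2 * Real.sqrt (R ^ 2 - x ^ 2)) volume a R :=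
    (Continuous.intervalIntegrable (by continuity) a R)
  rw [intervalIntegral.integral_eq_sub_of_hasDerivAt_of_le ha' hcont hderiv hint]
  rw [div_self hR.ne', Real.arcsin_one, Real.arccos]
  simp
  ring
set_option maxHeartbeats 2000000 in
private lemma volume_lens (R1 R2 r : ℝ) (hR1 : 0 < R1) (hR2 : 0 < R2)
    (h1 : |R1 - R2| ≤ r) (h2 : r ≤ R1 + R2) (h3 : 0 < r) :
    (volume {p : ℝ × ℝ | p.1 ^ 2 + p.2 ^ 2 ≤ R1 ^ 2 ∧ (p.1 - r) ^ 2 + p.2 ^ 2 ≤ R2 ^ 2}).toReal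
      = R1 ^ 2 * Real.arccos ((r ^ 2 + R1 ^ 2 - R2 ^ 2) / (2 * r * R1)) +
        R2 ^ 2 * Real.arccos ((r ^ 2 + R2 ^ 2 - R1 ^ 2) / (2 * r * R2)) -
        Real.sqrt ((R1 + R2 + r) * (R1 + R2 - r) * (R1 - R2 + r) * (-R1 + R2 + r)) / 2 := by
  obtain ⟨h1a, h1b⟩ := abs_le.1 h1  -- -r ≤ R1 - R2 ≤ r
  set S : Set (ℝ × ℝ) :=
    {p : ℝ × ℝ | p.1 ^ 2 + p.2 ^ 2 ≤ R1 ^ 2 ∧ (p.1 - r) ^ 2 + p.2 ^ 2 ≤ R2 ^ 2} with hS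
  have hSm : MeasurableSet S := by
    have : S = {p : ℝ × ℝ | p.1 ^ 2 + p.2 ^ 2 ≤ R1 ^ 2} ∩
        {p : ℝ × ℝ | (p.1 - r) ^ 2 + p.2 ^ 2 ≤ R2 ^ 2} := rfl
    rw [this]
    exact (measurableSet_le (by fun_prop) measurable_const).inter
      (measurableSet_le (by fun_prop) measurable_const)
  have hslice : ∀ x : ℝ, (volume (Prod.mk x ⁻¹' S))
      = Set.indicator (Icc (r - R2) R1)
          (fun x => ENNReal.ofReal (2 * Real.sqrt (min (R1 ^ 2 - x ^ 2) (R2 ^ 2 - (x - r) ^ 2)))) x := by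
    intro x
    by_cases hx : x ∈ Icc (r - R2) R1
    · rw [Set.indicator_of_mem hx]
      have hc1 : 0 ≤ R1 ^ 2 - x ^ 2 := by
        obtain ⟨hxa, hxb⟩ := hx; nlinarith
      have hc2 : 0 ≤ R2 ^ 2 - (x - r) ^ 2 := by
        obtain ⟨hxa, hxb⟩ := hx; nlinarith
      have hm : 0 ≤ min (R1 ^ 2 - x ^ 2) (R2 ^ 2 - (x - r) ^ 2) := le_min hc1 hc2
      have hset : Prod.mk x ⁻¹' S =
          Icc (-Real.sqrt (min (R1 ^ 2 - x ^ 2) (R2 ^ 2 - (x - r) ^ 2)))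
              (Real.sqrt (min (R1 ^ 2 - x ^ 2) (R2 ^ 2 - (x - r) ^ 2))) := by
        ext y
        simp only [Set.mem_preimage, hS, Set.mem_setOf_eq, Set.mem_Icc]
        constructor
        · rintro ⟨hy1, hy2⟩
          have : y ^ 2 ≤ min (R1 ^ 2 - x ^ 2) (R2 ^ 2 - (x - r) ^ 2) :=
            le_min (by linarith) (by linarith)
          have habs := Real.sqrt_le_sqrt this
          rw [Real.sqrt_sq_eq_abs] at habs
          exact abs_le.1 habs
        · rintro ⟨hy1, hy2⟩
          have habs : |y| ≤ Real.sqrt (min (R1 ^ 2 - x ^ 2) (R2 ^ 2 - (x - r) ^ 2)) :=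
            abs_le.2 ⟨hy1, hy2⟩
          have : y ^ 2 ≤ min (R1 ^ 2 - x ^ 2) (R2 ^ 2 - (x - r) ^ 2) := by
            have := pow_le_pow_left₀ (abs_nonneg y) habs 2
            rwa [sq_abs, Real.sq_sqrt hm] at this
          have hmin1 := min_le_left (R1 ^ 2 - x ^ 2) (R2 ^ 2 - (x - r) ^ 2)
          have hmin2 := min_le_right (R1 ^ 2 - x ^ 2) (R2 ^ 2 - (x - r) ^ 2)
          exact ⟨by nlinarith, by nlinarith⟩
      rw [hset, Real.volume_Icc]
      congr 1
      have := Real.sqrt_nonneg (min (R1 ^ 2 - x ^ 2) (R2 ^ 2 - (x - r) ^ 2))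
      ring
    · rw [Set.indicator_of_notMem hx]
      have hset : Prod.mk x ⁻¹' S = ∅ := by
        ext y
        simp only [Set.mem_preimage, hS, Set.mem_setOf_eq, Set.mem_empty_iff_false, iff_false]
        rintro ⟨hy1, hy2⟩
        simp only [Set.mem_Icc, not_and_or, not_le] at hx
        rcases hx with h | h
        · nlinarith [sq_nonneg y]
        · nlinarith [sq_nonneg y]
      rw [hset]
      simp
  have hf1 : (0:ℝ) ≤ R1 + R2 + r := by linarith
  have hf2 : (0:ℝ) ≤ R1 + R2 - r := by linarith
  have hf3 : (0:ℝ) ≤ R1 - R2 + r := by linarith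
  have hf4 : (0:ℝ) ≤ -R1 + R2 + r := by linarith
  have h2r : (0:ℝ) < 2 * r := by linarith
  have hprod : volume S = ∫⁻ x, volume (Prod.mk x ⁻¹' S) := by
    rw [Measure.volume_eq_prod, Measure.prod_apply hSm]
  set g : ℝ → ℝ := fun x => 2 * Real.sqrt (min (R1 ^ 2 - x ^ 2) (R2 ^ 2 - (x - r) ^ 2)) with hg
  have hgc : Continuous g := by
    apply Continuous.mul continuous_const
    exact Real.continuous_sqrt.comp ((continuous_const.sub (continuous_pow 2)).min
      (continuous_const.sub ((continuous_id.sub continuous_const).pow 2)))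
  have hle : r - R2 ≤ R1 := by linarith
  have key : volume S = ∫⁻ x in Icc (r - R2) R1, ENNReal.ofReal (g x) := by
    rw [hprod]
    simp_rw [hslice]
    rw [lintegral_indicator measurableSet_Icc]
  have hInt : IntegrableOn g (Icc (r - R2) R1) volume :=
    hgc.continuousOn.integrableOn_Icc
  have htoReal : (volume S).toReal = ∫ x in Icc (r - R2) R1, g x := by
    rw [key, ← ofReal_integral_eq_lintegral_ofReal hInt
      (Filter.Eventually.of_forall fun x => by positivity)]
    rw [ENNReal.toReal_ofReal]
    exact integral_nonneg fun x => by positivity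
  set d1 := (r ^ 2 + R1 ^ 2 - R2 ^ 2) / (2 * r) with hd1
  set d2 := (r ^ 2 + R2 ^ 2 - R1 ^ 2) / (2 * r) with hd2
  have hd1a : r - R2 ≤ d1 := by
    rw [hd1, le_div_iff₀ h2r]; nlinarith [mul_nonneg hf2 hf3]
  have hd1b : d1 ≤ R1 := by
    rw [hd1, div_le_iff₀ h2r]; nlinarith [mul_nonneg hf2 hf4]
  have hd1c : -R1 ≤ d1 := by
    rw [hd1, le_div_iff₀ h2r]; nlinarith [mul_nonneg hf3 hf1]
  have hd2a : -R2 ≤ d2 := by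
    rw [hd2, le_div_iff₀ h2r]; nlinarith [mul_nonneg hf4 hf1]
  have hd2b : d2 ≤ R2 := by
    rw [hd2, div_le_iff₀ h2r]; nlinarith [mul_nonneg hf2 hf3]
  have hsplit : ∫ x in Icc (r - R2) R1, g x = ∫ x in (r - R2)..R1, g x := by
    rw [intervalIntegral.integral_of_le hle, integral_Icc_eq_integral_Ioc]
  have hi1 : IntervalIntegrable g volume (r - R2) d1 := hgc.intervalIntegrable _ _
  have hi2 : IntervalIntegrable g volume d1 R1 := hgc.intervalIntegrable _ _
  have hadd : ∫ x in (r - R2)..R1, g x = (∫ x in (r - R2)..d1, g x) + ∫ x in d1..R1, g x :=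
    (intervalIntegral.integral_add_adjacent_intervals hi1 hi2).symm
  have hI1 : ∫ x in (r - R2)..d1, g x
      = ∫ x in (r - R2)..d1, 2 * Real.sqrt (R2 ^ 2 - (x - r) ^ 2) := by
    apply intervalIntegral.integral_congr
    intro x hx
    rw [Set.uIcc_of_le hd1a] at hx
    simp only [hg]
    have hx2 : x * (2 * r) ≤ r ^ 2 + R1 ^ 2 - R2 ^ 2 := by
      have := hx.2; rw [hd1] at this; exact (le_div_iff₀ h2r).1 this
    have hmin : R2 ^ 2 - (x - r) ^ 2 ≤ R1 ^ 2 - x ^ 2 := by linarith [sq_nonneg (x - r), sq_abs x]; try nlinarith [hx2]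
    rw [min_eq_right hmin]
  have hI2 : ∫ x in d1..R1, g x = ∫ x in d1..R1, 2 * Real.sqrt (R1 ^ 2 - x ^ 2) := by
    apply intervalIntegral.integral_congr
    intro x hx
    rw [Set.uIcc_of_le hd1b] at hx
    simp only [hg]
    have hx2 : r ^ 2 + R1 ^ 2 - R2 ^ 2 ≤ x * (2 * r) := by
      have := hx.1; rw [hd1] at this; exact (div_le_iff₀ h2r).1 this
    have hmin : R1 ^ 2 - x ^ 2 ≤ R2 ^ 2 - (x - r) ^ 2 := by linarith [sq_nonneg (x - r)]; try nlinarith [hx2]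
    rw [min_eq_left hmin]
  have hI1' : ∫ x in (r - R2)..d1, 2 * Real.sqrt (R2 ^ 2 - (x - r) ^ 2)
      = ∫ x in d2..R2, 2 * Real.sqrt (R2 ^ 2 - x ^ 2) := by
    have hcs := intervalIntegral.integral_comp_sub_left (a := r - R2) (b := d1)
      (fun u => 2 * Real.sqrt (R2 ^ 2 - u ^ 2)) r
    have e1 : r - (r - R2) = R2 := by ring
    have e2 : r - d1 = d2 := by rw [hd1, hd2]; field_simp; ring
    rw [e1, e2] at hcs
    have e3 : (∫ x in (r - R2)..d1, 2 * Real.sqrt (R2 ^ 2 - (x - r) ^ 2))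
        = ∫ x in (r - R2)..d1, 2 * Real.sqrt (R2 ^ 2 - (r - x) ^ 2) := by
      apply intervalIntegral.integral_congr
      intro x _
      show 2 * Real.sqrt (R2 ^ 2 - (x - r) ^ 2) = 2 * Real.sqrt (R2 ^ 2 - (r - x) ^ 2)
      rw [show R2 ^ 2 - (x - r) ^ 2 = R2 ^ 2 - (r - x) ^ 2 by ring]
    rw [e3]
    exact hcs
  have hv1 : ∫ x in d2..R2, 2 * Real.sqrt (R2 ^ 2 - x ^ 2)
      = R2 ^ 2 * Real.arccos (d2 / R2) - d2 * Real.sqrt (R2 ^ 2 - d2 ^ 2) :=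
    integral_two_sqrt hR2 hd2a hd2b
  have hv2 : ∫ x in d1..R1, 2 * Real.sqrt (R1 ^ 2 - x ^ 2)
      = R1 ^ 2 * Real.arccos (d1 / R1) - d1 * Real.sqrt (R1 ^ 2 - d1 ^ 2) :=
    integral_two_sqrt hR1 hd1c hd1b
  -- assemble
  rw [htoReal, hsplit, hadd, hI1, hI1', hv1, hI2, hv2]
  -- algebra
  set P : ℝ := (R1 + R2 + r) * (R1 + R2 - r) * (R1 - R2 + r) * (-R1 + R2 + r) with hP
  have hPnn : 0 ≤ P := mul_nonneg (mul_nonneg (mul_nonneg hf1 hf2) hf3) hf4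
  have hq1 : R1 ^ 2 - d1 ^ 2 = P / (2 * r) ^ 2 := by
    rw [hd1, hP]; field_simp; ring
  have hq2 : R2 ^ 2 - d2 ^ 2 = P / (2 * r) ^ 2 := by
    rw [hd2, hP]; field_simp; ring
  have hsq : Real.sqrt (P / (2 * r) ^ 2) = Real.sqrt P / (2 * r) := by
    rw [Real.sqrt_div hPnn, Real.sqrt_sq h2r.le]
  have ha1 : d1 / R1 = (r ^ 2 + R1 ^ 2 - R2 ^ 2) / (2 * r * R1) := by
    rw [hd1, div_div]
  have ha2 : d2 / R2 = (r ^ 2 + R2 ^ 2 - R1 ^ 2) / (2 * r * R2) := by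
    rw [hd2, div_div]
  rw [hq1, hq2, hsq, ha1, ha2]
  have hdsum : d1 + d2 = r := by
    rw [hd1, hd2, ← add_div,
      show r ^ 2 + R1 ^ 2 - R2 ^ 2 + (r ^ 2 + R2 ^ 2 - R1 ^ 2) = r * (2 * r) by ring,
      mul_div_assoc, div_self h2r.ne', mul_one]
  have : d1 * (Real.sqrt P / (2 * r)) + d2 * (Real.sqrt P / (2 * r)) = Real.sqrt P / 2 := by
    rw [← add_mul, hdsum, ← mul_div_assoc, show (2 : ℝ) * r = r * 2 by ring,
      mul_div_mul_left _ _ h3.ne']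
  linarith [this]


set_option maxHeartbeats 1000000 in
/-- Area of the intersection of two discs in the plane: if the discs
`b(x₁,R₁)` and `b(x₂,R₂)` have center distance `r` with `|R₁ - R₂| ≤ r ≤ R₁ + R₂`
and `r > 0`, then the Lebesgue area of their intersection is
`R₁²·arccos((r²+R₁²-R₂²)/(2rR₁)) + R₂²·arccos((r²+R₂²-R₁²)/(2rR₂)) - t/2`. -/
theorem area_inter_discs (R1 R2 : ℝ) (hR1 : 0 < R1) (hR2 : 0 < R2)
    (x1 x2 : EuclideanSpace ℝ (Fin 2)) (r : ℝ) (hr : r = dist x1 x2)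
    (h1 : |R1 - R2| ≤ r) (h2 : r ≤ R1 + R2) (h3 : 0 < r) :
    (volume (Metric.closedBall x1 R1 ∩ Metric.closedBall x2 R2)).toReal =
      R1 ^ 2 * Real.arccos ((r ^ 2 + R1 ^ 2 - R2 ^ 2) / (2 * r * R1)) +
      R2 ^ 2 * Real.arccos ((r ^ 2 + R2 ^ 2 - R1 ^ 2) / (2 * r * R2)) -
      Real.sqrt ((R1 + R2 + r) * (R1 + R2 - r) * (R1 - R2 + r) * (-R1 + R2 + r)) / 2 := by
  set v : EuclideanSpace ℝ (Fin 2) := x2 - x1 with hv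
  set w : EuclideanSpace ℝ (Fin 2) := EuclideanSpace.single (0 : Fin 2) r with hw
  have hnv : ‖v‖ = r := by
    rw [hr, dist_eq_norm, ← norm_neg (x1 - x2)]
    congr 1
    rw [hv]
    abel
  have hnw : ‖w‖ = r := by
    rw [hw, EuclideanSpace.norm_single, Real.norm_eq_abs, abs_of_nonneg h3.le]
  set L : EuclideanSpace ℝ (Fin 2) ≃ₗᵢ[ℝ] EuclideanSpace ℝ (Fin 2) :=
    Submodule.reflection (ℝ ∙ (v - w))ᗮ with hL
  have hLv : L v = w := Submodule.reflection_sub (by rw [hnv, hnw])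
  set Φ : EuclideanSpace ℝ (Fin 2) → ℝ × ℝ := fun p =>
    MeasurableEquiv.finTwoArrow ((MeasurableEquiv.toLp 2 (Fin 2 → ℝ)).symm (L (p - x1))) with hΦ
  have hΦapp : ∀ p, Φ p = ((L (p - x1)) 0, (L (p - x1)) 1) := fun p => rfl
  have hMP : MeasurePreserving Φ volume volume := by
    have mp1 : MeasurePreserving (fun p : EuclideanSpace ℝ (Fin 2) => p - x1)
        volume volume := by
      simpa [sub_eq_add_neg] using
        measurePreserving_add_right (volume : Measure (EuclideanSpace ℝ (Fin 2))) (-x1)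
    exact (volume_preserving_finTwoArrow ℝ).comp
      ((EuclideanSpace.volume_preserving_symm_measurableEquiv_toLp (Fin 2)).comp
        (L.measurePreserving.comp mp1))
  set S : Set (ℝ × ℝ) :=
    {p : ℝ × ℝ | p.1 ^ 2 + p.2 ^ 2 ≤ R1 ^ 2 ∧ (p.1 - r) ^ 2 + p.2 ^ 2 ≤ R2 ^ 2} with hS
  have hSm : MeasurableSet S := by
    have : S = {p : ℝ × ℝ | p.1 ^ 2 + p.2 ^ 2 ≤ R1 ^ 2} ∩
        {p : ℝ × ℝ | (p.1 - r) ^ 2 + p.2 ^ 2 ≤ R2 ^ 2} := rfl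
    rw [this]
    exact (measurableSet_le (by fun_prop) measurable_const).inter
      (measurableSet_le (by fun_prop) measurable_const)
  have hpre : Metric.closedBall x1 R1 ∩ Metric.closedBall x2 R2 = Φ ⁻¹' S := by
    ext p
    set q : EuclideanSpace ℝ (Fin 2) := L (p - x1) with hq
    have hnq : Real.sqrt (q 0 ^ 2 + q 1 ^ 2) = dist p x1 := by
      rw [dist_eq_norm, ← L.norm_map (p - x1), ← hq, EuclideanSpace.norm_eq,
        Fin.sum_univ_two, Real.norm_eq_abs, Real.norm_eq_abs, sq_abs, sq_abs]
    have hnq2 : Real.sqrt ((q 0 - r) ^ 2 + q 1 ^ 2) = dist p x2 := by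
      have e : p - x2 = (p - x1) - v := by rw [hv]; abel
      rw [dist_eq_norm, e, ← L.norm_map ((p - x1) - v), map_sub, ← hq, hLv,
        EuclideanSpace.norm_eq, Fin.sum_univ_two]
      simp only [PiLp.sub_apply, hw, EuclideanSpace.single_apply]
      norm_num [sq_abs]
    simp only [Set.mem_inter_iff, Metric.mem_closedBall, Set.mem_preimage, hΦapp p, hS,
      Set.mem_setOf_eq, ← hq]
    rw [← hnq, ← hnq2, Real.sqrt_le_left hR1.le, Real.sqrt_le_left hR2.le]
  rw [hpre, hMP.measure_preimage hSm.nullMeasurableSet]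
  exact volume_lens R1 R2 r hR1 hR2 h1 h2 h3
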